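/- arXiv:2311.03204 — 2 statements merged into one kernel-verified Lean document; each statement's English description precedes it below -/
import Mathlib

section
/- For every integer N ≥ 1, ∫₀^∞ r·arctan²(r)/(1+r²)^{N+1} dr = (1/N) ∫₀^∞ arctan(r)/(1+r²)^{N+1} dr, and as N → ∞ this quantity is asymptotic to 1/(2N²). -/
open MeasureTheory Real Filter Asymptotics

lemma base_pos (r : ℝ) : (0:ℝ) < 1 + r ^ 2 := by positivity

lemma hasDeriv_base (r : ℝ) : HasDerivAt (fun r : ℝ => 1 + r ^ 2) (2 * r) r := by
  simpa using (hasDerivAt_pow 2 r).const_add 1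

lemma hasDeriv_pow_inv (n : ℕ) (hn : 1 ≤ n) (r : ℝ) :
    HasDerivAt (fun r : ℝ => -(1/(2*(n:ℝ))) * ((1+r^2)^n)⁻¹) (r / (1+r^2)^(n+1)) r := by
  have h1 := ((hasDeriv_base r).pow n).inv (pow_ne_zero _ (base_pos r).ne')
  have h2 := h1.const_mul (-(1/(2*(n:ℝ))))
  refine h2.congr_deriv ?_
  simp only [Pi.pow_apply, Pi.inv_apply, Pi.mul_apply]
  have hb := base_pos r
  have hn' : (n:ℝ) ≠ 0 := by positivity
  obtain ⟨m, rfl⟩ := Nat.exists_eq_add_of_le hn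
  simp only [Nat.add_sub_cancel_left]
  field_simp
  ring_nf

lemma tendsto_pow_inv (n : ℕ) (hn : 1 ≤ n) :
    Tendsto (fun r : ℝ => -(1/(2*(n:ℝ))) * ((1+r^2)^n)⁻¹) atTop (nhds 0) := by
  have h : Tendsto (fun r : ℝ => (1+r^2)^n) atTop atTop := by
    apply tendsto_atTop_mono' atTop ?_ tendsto_id
    filter_upwards [eventually_ge_atTop (0:ℝ)] with r hr
    have h1 : (1:ℝ) + r^2 ≤ (1+r^2)^n := le_self_pow₀ (by nlinarith) (by omega)
    simp only [id]
    nlinarith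
  have := h.inv_tendsto_atTop.const_mul (-(1/(2*(n:ℝ))))
  simpa using this

lemma powInt (n : ℕ) (hn : 1 ≤ n) :
    IntegrableOn (fun r : ℝ => r / (1+r^2)^(n+1)) (Set.Ioi 0) ∧
    ∫ r in Set.Ioi (0:ℝ), r / (1+r^2)^(n+1) = 1/(2*(n:ℝ)) := by
  have hd : ∀ x ∈ Set.Ici (0:ℝ), HasDerivAt (fun r : ℝ => -(1/(2*(n:ℝ))) * ((1+r^2)^n)⁻¹)
      (x / (1+x^2)^(n+1)) x := fun x _ => hasDeriv_pow_inv n hn x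
  have hpos : ∀ x ∈ Set.Ioi (0:ℝ), 0 ≤ x / (1+x^2)^(n+1) := by
    intro x hx; have := base_pos x; have hx' : (0:ℝ) < x := hx; positivity
  have hint := integrableOn_Ioi_deriv_of_nonneg' hd hpos (tendsto_pow_inv n hn)
  refine ⟨hint, ?_⟩
  rw [integral_Ioi_of_hasDerivAt_of_tendsto' hd hint (tendsto_pow_inv n hn)]
  norm_num

lemma arctan_nonneg' {r : ℝ} (hr : 0 ≤ r) : 0 ≤ Real.arctan r := by
  rw [← Real.arctan_zero]
  exact Real.arctan_strictMono.monotone hr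

lemma arctan_le_self' {r : ℝ} (hr : 0 ≤ r) : Real.arctan r ≤ r := by
  have hg : ∀ x : ℝ, HasDerivAt (fun x : ℝ => x - Real.arctan x) (1 - 1/(1+x^2)) x :=
    fun x => (hasDerivAt_id x).sub (Real.hasDerivAt_arctan x)
  have hmono : Monotone (fun x : ℝ => x - Real.arctan x) := by
    apply monotone_of_deriv_nonneg (fun x => (hg x).differentiableAt)
    intro x
    rw [(hg x).deriv]
    have hb := base_pos x
    rw [sub_nonneg, div_le_one hb]
    nlinarith
  have := hmono hr
  simpa using this

lemma div_le_arctan {r : ℝ} (hr : 0 ≤ r) : r / (1+r^2) ≤ Real.arctan r := by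
  have hg : ∀ x : ℝ, HasDerivAt (fun x : ℝ => Real.arctan x - x/(1+x^2))
      (1/(1+x^2) - ((1*(1+x^2) - x*(2*x))/(1+x^2)^2)) x :=
    fun x => (Real.hasDerivAt_arctan x).sub
      (((hasDerivAt_id x).div (hasDeriv_base x) (base_pos x).ne'))
  have hmono : Monotone (fun x : ℝ => Real.arctan x - x/(1+x^2)) := by
    apply monotone_of_deriv_nonneg (fun x => (hg x).differentiableAt)
    intro x
    rw [(hg x).deriv]
    have hb := base_pos x
    rw [div_sub_div _ _ hb.ne' (by positivity)]
    apply div_nonneg _ (by positivity)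
    nlinarith
  have := hmono hr
  simpa using this

lemma integrable_of_le_phi {h : ℝ → ℝ} (hc : Continuous h) (C : ℝ)
    (hb : ∀ r ∈ Set.Ioi (0:ℝ), |h r| ≤ C * (r / (1+r^2)^(1+1))) :
    IntegrableOn h (Set.Ioi 0) := by
  have hphi := (powInt 1 le_rfl).1
  apply Integrable.mono' (hphi.const_mul C) hc.aestronglyMeasurable.restrict
  rw [ae_restrict_iff' measurableSet_Ioi]
  filter_upwards with r hr
  exact hb r hr

lemma pow_base_le {r : ℝ} (hr : 0 ≤ r) {m n : ℕ} (hmn : m ≤ n) :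
    (1+r^2)^m ≤ (1+r^2)^n :=
  pow_le_pow_right₀ (by nlinarith) hmn

lemma int_h1 (N : ℕ) (hN : 1 ≤ N) :
    IntegrableOn (fun r : ℝ => r * Real.arctan r ^ 2 / (1 + r ^ 2) ^ (N + 1)) (Set.Ioi 0) := by
  have hc : Continuous (fun r : ℝ => r * Real.arctan r ^ 2 / (1 + r ^ 2) ^ (N + 1)) :=
    (continuous_id.mul (Real.continuous_arctan.pow 2)).div
      ((continuous_const.add (continuous_id.pow 2)).pow (N+1))
      (fun x => by have := base_pos x; positivity)
  apply integrable_of_le_phi hc ((π/2)^2)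
  intro r hr
  have hr0 : (0:ℝ) < r := hr
  have hb := base_pos r
  have h2 : (1+r^2)^(1+1) ≤ (1+r^2)^(N+1) := pow_base_le hr0.le (by omega)
  have ha1 : 0 ≤ Real.arctan r := arctan_nonneg' hr0.le
  have ha2 : Real.arctan r ≤ π/2 := (Real.arctan_lt_pi_div_two r).le
  rw [abs_of_nonneg (by positivity)]
  rw [div_le_iff₀ (by positivity)]
  have key : r * Real.arctan r ^ 2 * (1+r^2)^(1+1) ≤ (π/2)^2 * r * (1+r^2)^(N+1) := by
    calc r * Real.arctan r ^ 2 * (1+r^2)^(1+1) ≤ r * (π/2)^2 * (1+r^2)^(N+1) := by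
          apply mul_le_mul _ h2 (by positivity) (by positivity)
          exact mul_le_mul le_rfl (by nlinarith) (by positivity) hr0.le
      _ = (π/2)^2 * r * (1+r^2)^(N+1) := by ring
  calc r * Real.arctan r ^ 2 = (r * Real.arctan r ^ 2 * (1+r^2)^(1+1)) / (1+r^2)^(1+1) := by
        field_simp
    _ ≤ ((π/2)^2 * r * (1+r^2)^(N+1)) / (1+r^2)^(1+1) := by
        apply div_le_div_of_nonneg_right key (by positivity) |>.trans_eq rfl
    _ = (π/2)^2 * (r / (1+r^2)^(1+1)) * (1+r^2)^(N+1) := by ring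

lemma int_h2 (N : ℕ) (hN : 1 ≤ N) :
    IntegrableOn (fun r : ℝ => Real.arctan r / (1 + r ^ 2) ^ (N + 1)) (Set.Ioi 0) := by
  have hc : Continuous (fun r : ℝ => Real.arctan r / (1 + r ^ 2) ^ (N + 1)) :=
    Real.continuous_arctan.div
      ((continuous_const.add (continuous_id.pow 2)).pow (N+1))
      (fun x => by have := base_pos x; positivity)
  apply integrable_of_le_phi hc 1
  intro r hr
  have hr0 : (0:ℝ) < r := hr
  have hb := base_pos r
  have h2 : (1+r^2)^(1+1) ≤ (1+r^2)^(N+1) := pow_base_le hr0.le (by omega)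
  have ha1 : 0 ≤ Real.arctan r := arctan_nonneg' hr0.le
  rw [abs_of_nonneg (by positivity), one_mul]
  apply div_le_div₀ (by positivity) (arctan_le_self' hr0.le) (by positivity) h2

lemma hasDeriv_F (N : ℕ) (hN : 1 ≤ N) (x : ℝ) :
    HasDerivAt (fun r : ℝ => -(1/(2*(N:ℝ))) * (Real.arctan r ^ 2 * ((1+r^2)^N)⁻¹))
      (x * Real.arctan x ^ 2 / (1 + x ^ 2) ^ (N + 1)
        - (1/(N:ℝ)) * (Real.arctan x / (1 + x ^ 2) ^ (N + 1))) x := by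
  have hb := base_pos x
  have hA : HasDerivAt (fun x : ℝ => Real.arctan x ^ 2)
      ((2:ℝ) * Real.arctan x ^ 1 * (1/(1+x^2))) x := by
    exact_mod_cast (Real.hasDerivAt_arctan x).pow 2
  have hB := ((hasDeriv_base x).pow N).inv (by positivity : ((1+x^2)^N : ℝ) ≠ 0)
  have h := (hA.mul hB).const_mul (-(1/(2*(N:ℝ))))
  refine h.congr_deriv ?_
  simp only [Pi.pow_apply, Pi.inv_apply, Pi.mul_apply]
  obtain ⟨m, rfl⟩ := Nat.exists_eq_add_of_le hN
  simp only [Nat.add_sub_cancel_left]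
  have hn' : ((1+m:ℕ):ℝ) ≠ 0 := by positivity
  push_cast
  field_simp
  ring

lemma part1 (N : ℕ) (hN : 1 ≤ N) :
    (∫ r in Set.Ioi (0 : ℝ), r * Real.arctan r ^ 2 / (1 + r ^ 2) ^ (N + 1)) =
      (1 / (N : ℝ)) * ∫ r in Set.Ioi (0 : ℝ), Real.arctan r / (1 + r ^ 2) ^ (N + 1) := by
  have hd : ∀ x ∈ Set.Ici (0:ℝ),
      HasDerivAt (fun r : ℝ => -(1/(2*(N:ℝ))) * (Real.arctan r ^ 2 * ((1+r^2)^N)⁻¹))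
      (x * Real.arctan x ^ 2 / (1 + x ^ 2) ^ (N + 1)
        - (1/(N:ℝ)) * (Real.arctan x / (1 + x ^ 2) ^ (N + 1))) x :=
    fun x _ => hasDeriv_F N hN x
  have hint : IntegrableOn (fun x : ℝ => x * Real.arctan x ^ 2 / (1 + x ^ 2) ^ (N + 1)
      - (1/(N:ℝ)) * (Real.arctan x / (1 + x ^ 2) ^ (N + 1))) (Set.Ioi 0) :=
    (int_h1 N hN).sub ((int_h2 N hN).const_mul _)
  have hpow : Tendsto (fun r : ℝ => (1+r^2)^N) atTop atTop := by
    apply tendsto_atTop_mono' atTop ?_ tendsto_id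
    filter_upwards [eventually_ge_atTop (0:ℝ)] with r hr
    have h1 : (1:ℝ) + r^2 ≤ (1+r^2)^N := le_self_pow₀ (by nlinarith) (by omega)
    simp only [id]
    nlinarith
  have harc : Tendsto (fun r : ℝ => Real.arctan r ^ 2) atTop (nhds ((π/2)^2)) :=
    (Real.tendsto_arctan_atTop.mono_right nhdsWithin_le_nhds).pow 2
  have htend : Tendsto (fun r : ℝ => -(1/(2*(N:ℝ))) * (Real.arctan r ^ 2 * ((1+r^2)^N)⁻¹))
      atTop (nhds 0) := by
    have := (harc.mul hpow.inv_tendsto_atTop).const_mul (-(1/(2*(N:ℝ))))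
    simpa using this
  have h0 := integral_Ioi_of_hasDerivAt_of_tendsto' hd hint htend
  rw [MeasureTheory.integral_sub (int_h1 N hN) ((int_h2 N hN).const_mul _),
    MeasureTheory.integral_const_mul] at h0
  simp only [Real.arctan_zero] at h0
  norm_num at h0
  rw [one_div]
  linarith

lemma I_upper (N : ℕ) (hN : 1 ≤ N) :
    (∫ r in Set.Ioi (0:ℝ), Real.arctan r / (1 + r ^ 2) ^ (N + 1)) ≤ 1/(2*(N:ℝ)) := by
  rw [← (powInt N hN).2]
  apply setIntegral_mono_on (int_h2 N hN) (powInt N hN).1 measurableSet_Ioi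
  intro x hx
  have hx0 : (0:ℝ) < x := hx
  have hb := base_pos x
  gcongr
  exact arctan_le_self' hx0.le

lemma I_lower (N : ℕ) (hN : 1 ≤ N) :
    1/(2*((N:ℝ)+1)) ≤ ∫ r in Set.Ioi (0:ℝ), Real.arctan r / (1 + r ^ 2) ^ (N + 1) := by
  have hp := (powInt (N+1) (by omega)).2
  push_cast at hp
  rw [← hp]
  apply setIntegral_mono_on (powInt (N+1) (by omega)).1 (int_h2 N hN) measurableSet_Ioi
  intro x hx
  have hx0 : (0:ℝ) < x := hx
  have hb := base_pos x
  have heq : x / (1+x^2)^(N+1+1) = (x/(1+x^2)) / (1+x^2)^(N+1) := by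
    rw [div_div, ← pow_succ']
  rw [heq]
  gcongr
  exact div_le_arctan hx0.le

/-- For every integer `N ≥ 1`,
`∫₀^∞ r arctan²(r)/(1+r²)^{N+1} dr = (1/N) ∫₀^∞ arctan(r)/(1+r²)^{N+1} dr`,
and as `N → ∞` this quantity is asymptotic to `1/(2N²)`. -/
theorem integral_r_arctan_sq_pow :
    (∀ N : ℕ, 1 ≤ N →
      (∫ r in Set.Ioi (0 : ℝ), r * Real.arctan r ^ 2 / (1 + r ^ 2) ^ (N + 1)) =
        (1 / (N : ℝ)) * ∫ r in Set.Ioi (0 : ℝ), Real.arctan r / (1 + r ^ 2) ^ (N + 1)) ∧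
    (fun N : ℕ => ∫ r in Set.Ioi (0 : ℝ), r * Real.arctan r ^ 2 / (1 + r ^ 2) ^ (N + 1))
      ~[atTop] (fun N : ℕ => 1 / (2 * (N : ℝ) ^ 2)) := by
  refine ⟨fun N hN => part1 N hN, ?_⟩
  rw [isEquivalent_iff_tendsto_one]
  · apply tendsto_of_tendsto_of_tendsto_of_le_of_le'
      (tendsto_natCast_div_add_atTop (1:ℝ)) tendsto_const_nhds
    · filter_upwards [eventually_ge_atTop 1] with N hN
      have hN0 : (0:ℝ) < N := by exact_mod_cast hN
      have hI2 := I_lower N hN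
      simp only [Pi.div_apply]
      rw [part1 N hN]
      have hkey : (1 / (N:ℝ) * ∫ r in Set.Ioi (0:ℝ), Real.arctan r / (1 + r ^ 2) ^ (N + 1))
          / (1 / (2 * (N:ℝ) ^ 2))
          = 2 * (N:ℝ) * ∫ r in Set.Ioi (0:ℝ), Real.arctan r / (1 + r ^ 2) ^ (N + 1) := by
        field_simp
      rw [hkey]
      have h1 : 2 * (N:ℝ) * (1/(2*((N:ℝ)+1)))
          ≤ 2 * (N:ℝ) * ∫ r in Set.Ioi (0:ℝ), Real.arctan r / (1 + r ^ 2) ^ (N + 1) :=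
        mul_le_mul_of_nonneg_left hI2 (by positivity)
      have heq : 2 * (N:ℝ) * (1/(2*((N:ℝ)+1))) = (N:ℝ)/((N:ℝ)+1) := by
        field_simp
      linarith
    · filter_upwards [eventually_ge_atTop 1] with N hN
      have hN0 : (0:ℝ) < N := by exact_mod_cast hN
      have hI1 := I_upper N hN
      simp only [Pi.div_apply]
      rw [part1 N hN]
      have hkey : (1 / (N:ℝ) * ∫ r in Set.Ioi (0:ℝ), Real.arctan r / (1 + r ^ 2) ^ (N + 1))
          / (1 / (2 * (N:ℝ) ^ 2))
          = 2 * (N:ℝ) * ∫ r in Set.Ioi (0:ℝ), Real.arctan r / (1 + r ^ 2) ^ (N + 1) := by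
        field_simp
      rw [hkey]
      have h1 : 2 * (N:ℝ) * (∫ r in Set.Ioi (0:ℝ), Real.arctan r / (1 + r ^ 2) ^ (N + 1))
          ≤ 2 * (N:ℝ) * (1/(2*(N:ℝ))) :=
        mul_le_mul_of_nonneg_left hI1 (by positivity)
      have heq : 2 * (N:ℝ) * (1/(2*(N:ℝ))) = 1 := by
        field_simp
      linarith
  · filter_upwards [eventually_ge_atTop 1] with N hN
    have hN0 : (0:ℝ) < N := by exact_mod_cast hN
    positivity
end

section
/- Let K_N(x,y) be the spherical ensemble kernel on S², with |K_N(x,y)|² = N²(1 − |x−y|²/4)^{N−1} (Euclidean distance in ℝ³). Define C_N^1 = ∫_{S²} |K_N(x,y)|² d(x,y) dσ(x) where d is geodesic distance and σ normalized surface measure. Then lim_{N→∞} C_N^1/√N = √π. -/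
open MeasureTheory Real Filter Set Topology

private lemma aux_arctan_pos {x : ℝ} (h : 0 < x) : 0 < Real.arctan x := by
  have := Real.arctan_strictMono h
  rwa [Real.arctan_zero] at this

private lemma aux_arctan_le {x : ℝ} (hx : 0 ≤ x) : Real.arctan x ≤ x := by
  rcases eq_or_lt_of_le hx with h | h
  · simp [← h]
  · refine le_of_lt ?_
    have := Real.lt_tan (aux_arctan_pos h) (Real.arctan_lt_pi_div_two x)
    rwa [Real.tan_arctan] at this

private lemma aux_bernoulli2 {x : ℝ} (hx : 0 ≤ x) (n : ℕ) :
    1 + (n : ℝ) * x + ((n : ℝ) * ((n : ℝ) - 1) / 2) * x ^ 2 ≤ (1 + x) ^ n := by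
  induction n with
  | zero => norm_num
  | succ n ih =>
    have h1 : (1 + (n : ℝ) * x + ((n : ℝ) * ((n : ℝ) - 1) / 2) * x ^ 2) * (1 + x)
        ≤ (1 + x) ^ n * (1 + x) :=
      mul_le_mul_of_nonneg_right ih (by linarith)
    have h2 : (1 + x) ^ (n + 1) = (1 + x) ^ n * (1 + x) := pow_succ _ _
    have h3 : 0 ≤ (n : ℝ) * ((n : ℝ) - 1) := by
      rcases Nat.eq_zero_or_pos n with h | h
      · simp [h]
      · have : (1 : ℝ) ≤ (n : ℝ) := by exact_mod_cast h
        nlinarith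
    push_cast
    nlinarith [mul_nonneg (div_nonneg h3 (by norm_num : (0:ℝ) ≤ 2))
      (mul_nonneg hx (sq_nonneg x))]

private lemma aux_pow_exp (a : ℝ) :
    Tendsto (fun n : ℕ => (1 + a / (n : ℝ)) ^ (n + 1)) atTop (𝓝 (Real.exp a)) := by
  have h1 : Tendsto (fun n : ℕ => 1 + a / (n : ℝ)) atTop (𝓝 1) := by
    have := (tendsto_one_div_atTop_nhds_zero_nat.const_mul a).const_add 1
    simpa [mul_one_div, div_eq_mul_inv] using this
  have := (Real.tendsto_one_add_div_pow_exp a).mul h1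
  simpa [pow_succ] using this

private lemma aux_sqrt_arctan {t : ℝ} (ht : 0 < t) :
    Tendsto (fun n : ℕ => Real.sqrt n * Real.arctan (t / Real.sqrt n)) atTop (𝓝 t) := by
  have hu : Tendsto (fun n : ℕ => t / Real.sqrt n) atTop (𝓝 0) := by
    have h0 : Tendsto (fun n : ℕ => (1 : ℝ) / n) atTop (𝓝 0) :=
      tendsto_one_div_atTop_nhds_zero_nat
    have h1 := (Real.continuous_sqrt.tendsto 0).comp h0
    rw [Real.sqrt_zero] at h1
    have h2 := h1.const_mul t
    simpa [one_div, Real.sqrt_inv, div_eq_mul_inv] using h2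
  have hslope := hasDerivAt_iff_tendsto_slope.mp (Real.hasDerivAt_arctan 0)
  norm_num at hslope
  have hne : ∀ᶠ n : ℕ in atTop, t / Real.sqrt n ∈ ({0}ᶜ : Set ℝ) := by
    filter_upwards [eventually_ge_atTop 1] with n hn
    have hs : (0:ℝ) < Real.sqrt n := Real.sqrt_pos.mpr (by exact_mod_cast hn)
    simp [div_ne_zero ht.ne' hs.ne']
  have hcomp : Tendsto (fun n : ℕ => slope Real.arctan 0 (t / Real.sqrt n)) atTop (𝓝 1) :=
    hslope.comp (tendsto_nhdsWithin_of_tendsto_nhds_of_eventually_within _ hu hne)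
  have hmul := hcomp.const_mul t
  rw [mul_one] at hmul
  refine hmul.congr' ?_
  filter_upwards [eventually_ge_atTop 1] with n hn
  have hs : (0:ℝ) < Real.sqrt n := Real.sqrt_pos.mpr (by exact_mod_cast hn)
  rw [slope_def_field, Real.arctan_zero]
  field_simp
  simp only [sub_zero, mul_zero]
  rw [mul_div_cancel_left₀ _ ht.ne']

private lemma aux_gauss_int :
    ∫ t in Ioi (0:ℝ), 2 * t ^ 2 * Real.exp (-t ^ 2) = Real.sqrt π / 2 := by
  have h := integral_rpow_mul_exp_neg_rpow (p := 2) (q := 2) (by norm_num) (by norm_num)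
  have heq : EqOn (fun x : ℝ => x ^ (2:ℝ) * Real.exp (-x ^ (2:ℝ)))
      (fun x : ℝ => x ^ 2 * Real.exp (-x ^ 2)) (Ioi 0) := by
    intro x hx
    simp only
    rw [show ((2:ℝ)) = ((2:ℕ):ℝ) by norm_num, Real.rpow_natCast]
  rw [setIntegral_congr_fun measurableSet_Ioi heq] at h
  have hG : Real.Gamma (((2:ℝ)+1)/2) = Real.sqrt π / 2 := by
    rw [show ((2:ℝ)+1)/2 = 1/2 + 1 by norm_num, Real.Gamma_add_one (by norm_num),
      Real.Gamma_one_half_eq]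
    ring
  calc ∫ t in Ioi (0:ℝ), 2 * t ^ 2 * Real.exp (-t ^ 2)
      = 2 * ∫ t in Ioi (0:ℝ), t ^ 2 * Real.exp (-t ^ 2) := by
        simp_rw [mul_assoc]
        exact integral_const_mul 2 _
    _ = 2 * (1/2 * Real.Gamma (((2:ℝ)+1)/2)) := by rw [h]
    _ = Real.sqrt π / 2 := by rw [hG]; ring

/-- The rescaled integrand. -/
noncomputable def FF (n : ℕ) (t : ℝ) : ℝ :=
  t * (2 * Real.sqrt n * Real.arctan (t / Real.sqrt n)) / (1 + t ^ 2 / n) ^ (n + 1)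

private lemma FF_cont (n : ℕ) (hn : 1 ≤ n) : Continuous (FF n) := by
  unfold FF
  have hne : ∀ t : ℝ, (1 + t ^ 2 / (n:ℝ)) ^ (n + 1) ≠ 0 := by
    intro t
    have h1 : (0:ℝ) < (n:ℝ) := by exact_mod_cast hn
    positivity
  exact (continuous_id.mul (continuous_const.mul
    (Real.continuous_arctan.comp (continuous_id.div_const _)))).div
    (((continuous_const.add ((continuous_pow 2).div_const _)).pow _)) hne

private lemma aux_key :
    Tendsto (fun n : ℕ => ∫ t in Ioi (0:ℝ), FF n t) atTop (𝓝 (Real.sqrt π / 2)) := by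
  rw [← tendsto_add_atTop_iff_nat 2, ← aux_gauss_int]
  refine tendsto_integral_of_dominated_convergence (fun t => 8 / (1 + t ^ 2))
    (fun n => ((FF_cont (n+2) (by omega)).aestronglyMeasurable).restrict) ?_ ?_ ?_
  · have : Integrable (fun t : ℝ => 8 / (1 + t ^ 2)) := by
      simpa [div_eq_mul_inv] using integrable_inv_one_add_sq.const_mul 8
    exact this.restrict
  · intro n
    filter_upwards [ae_restrict_mem measurableSet_Ioi] with t ht
    have ht' : (0:ℝ) < t := ht
    set m : ℕ := n + 2 with hm
    have hmR : (2:ℝ) ≤ (m:ℝ) := by exact_mod_cast Nat.le_add_left 2 n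
    have hmpos : (0:ℝ) < (m:ℝ) := by linarith
    have hs : (0:ℝ) < Real.sqrt m := Real.sqrt_pos.mpr hmpos
    have hx : (0:ℝ) ≤ t ^ 2 / (m:ℝ) := by positivity
    have hnum : t * (2 * Real.sqrt m * Real.arctan (t / Real.sqrt m)) ≤ 2 * t ^ 2 := by
      have h1 : Real.arctan (t / Real.sqrt m) ≤ t / Real.sqrt m :=
        aux_arctan_le (by positivity)
      have h2 : t * (2 * Real.sqrt m * Real.arctan (t / Real.sqrt m))
          ≤ t * (2 * Real.sqrt m * (t / Real.sqrt m)) := by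
        apply mul_le_mul_of_nonneg_left _ ht'.le
        exact mul_le_mul_of_nonneg_left h1 (by positivity)
      calc t * (2 * Real.sqrt m * Real.arctan (t / Real.sqrt m))
          ≤ t * (2 * Real.sqrt m * (t / Real.sqrt m)) := h2
        _ = 2 * t ^ 2 := by field_simp
    have hnum0 : 0 ≤ t * (2 * Real.sqrt m * Real.arctan (t / Real.sqrt m)) := by
      have : 0 ≤ Real.arctan (t / Real.sqrt m) := by
        rw [← Real.arctan_zero]
        exact Real.arctan_strictMono.monotone (by positivity)
      positivity
    have hden : 1 + t ^ 2 + t ^ 4 / 4 ≤ (1 + t ^ 2 / (m:ℝ)) ^ (m + 1) := by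
      have hb := aux_bernoulli2 hx m
      have h3 : 1 + t ^ 2 + t ^ 4 / 4
          ≤ 1 + (m:ℝ) * (t ^ 2 / m) + ((m:ℝ) * ((m:ℝ) - 1) / 2) * (t ^ 2 / m) ^ 2 := by
        have e1 : (m:ℝ) * (t ^ 2 / m) = t ^ 2 := by field_simp
        have e2 : ((m:ℝ) * ((m:ℝ) - 1) / 2) * (t ^ 2 / m) ^ 2
            = (((m:ℝ) - 1) / (2 * m)) * t ^ 4 := by field_simp
        rw [e1, e2]
        have : (1:ℝ) / 4 ≤ ((m:ℝ) - 1) / (2 * m) := by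
          rw [div_le_div_iff₀ (by norm_num) (by linarith)]
          linarith
        nlinarith [pow_nonneg ht'.le 4]
      have h4 : (1 + t ^ 2 / (m:ℝ)) ^ m ≤ (1 + t ^ 2 / (m:ℝ)) ^ (m + 1) := by
        apply pow_le_pow_right₀ (by linarith) (by omega)
      linarith
    have hdpos : (0:ℝ) < (1 + t ^ 2 / (m:ℝ)) ^ (m + 1) := by positivity
    rw [Real.norm_eq_abs]
    unfold FF
    rw [abs_of_nonneg (div_nonneg hnum0 hdpos.le)]
    calc t * (2 * Real.sqrt m * Real.arctan (t / Real.sqrt m)) / (1 + t ^ 2 / (m:ℝ)) ^ (m + 1)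
        ≤ 2 * t ^ 2 / (1 + t ^ 2 + t ^ 4 / 4) :=
          div_le_div₀ (by positivity) hnum (by positivity) hden
      _ ≤ 8 / (1 + t ^ 2) := by
          rw [div_le_div_iff₀ (by positivity) (by positivity)]
          nlinarith [sq_nonneg t, pow_nonneg ht'.le 4]
  · filter_upwards [ae_restrict_mem measurableSet_Ioi] with t ht
    have ht' : (0:ℝ) < t := ht
    have h1 : Tendsto (fun n : ℕ => t * (2 * Real.sqrt n * Real.arctan (t / Real.sqrt n)))
        atTop (𝓝 (t * (2 * t))) := by
      simpa [mul_assoc] using ((aux_sqrt_arctan ht').const_mul 2).const_mul t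
    have h2 := aux_pow_exp (t ^ 2)
    have h3 := h1.div h2 (Real.exp_ne_zero _)
    have h4 : t * (2 * t) / Real.exp (t ^ 2) = 2 * t ^ 2 * Real.exp (-t ^ 2) := by
      rw [Real.exp_neg, div_eq_mul_inv]; ring
    rw [h4] at h3
    exact h3.comp (tendsto_add_atTop_nat 2)

private lemma aux_eq (N : ℕ) (hN : 1 ≤ N) :
    (2 * (N : ℝ) ^ 2 *
        ∫ r in Set.Ioi (0 : ℝ), r * (2 * Real.arctan r) / (1 + r ^ 2) ^ (N + 1)) /
      Real.sqrt N = 2 * ∫ t in Ioi (0:ℝ), FF N t := by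
  set s : ℝ := Real.sqrt N with hsdef
  have hNpos : (0:ℝ) < (N:ℝ) := by exact_mod_cast hN
  have hs : (0:ℝ) < s := Real.sqrt_pos.mpr hNpos
  have hs2 : s * s = (N:ℝ) := Real.mul_self_sqrt (Nat.cast_nonneg N)
  have hscale := integral_comp_mul_left_Ioi
    (fun r => r * (2 * Real.arctan r) / (1 + r ^ 2) ^ (N + 1)) 0 (inv_pos.mpr hs)
  simp only [mul_zero, inv_inv, smul_eq_mul] at hscale
  have hFF : ∀ t : ℝ, FF N t =
      (N:ℝ) * ((s⁻¹ * t) * (2 * Real.arctan (s⁻¹ * t)) / (1 + (s⁻¹ * t) ^ 2) ^ (N + 1)) := by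
    intro t
    have h2 : (s⁻¹ * t) ^ 2 = t ^ 2 / (N:ℝ) := by
      rw [mul_pow, ← hs2]
      field_simp
    unfold FF
    rw [h2, ← hsdef, show t / s = s⁻¹ * t from by rw [div_eq_inv_mul], mul_div_assoc']
    congr 1
    rw [← hs2]
    field_simp
  have hint : ∫ t in Ioi (0:ℝ), FF N t = (N:ℝ) * (s * ∫ r in Ioi (0:ℝ),
      r * (2 * Real.arctan r) / (1 + r ^ 2) ^ (N + 1)) := by
    rw [← hscale]
    simp_rw [hFF]
    exact integral_const_mul _ _
  rw [hint, ← hs2]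
  field_simp

/-- For the spherical ensemble on `S²`,
`C_N^1 = 2N² ∫₀^∞ r (2 arctan r)(1+r²)^{−(N+1)} dr` satisfies
`lim_{N→∞} C_N^1/√N = √π`. -/
theorem spherical_ensemble_CN1 :
    Tendsto (fun N : ℕ =>
        (2 * (N : ℝ) ^ 2 *
          ∫ r in Set.Ioi (0 : ℝ), r * (2 * Real.arctan r) / (1 + r ^ 2) ^ (N + 1)) /
          Real.sqrt N)
      atTop (nhds (Real.sqrt π)) := by
  have hkey := aux_key.const_mul 2
  rw [show 2 * (Real.sqrt π / 2) = Real.sqrt π by ring] at hkey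
  refine hkey.congr' ?_
  filter_upwards [eventually_ge_atTop 1] with N hN
  exact (aux_eq N hN).symm
end
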